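/- Let k be a field of characteristic 0, G a finite group, and C = FI_G. Every finitely generated projective C-module is an injective object in the abelian category of C-modules. -/

import Mathlib

open CategoryTheory CategoryTheory.Limits

attribute [local instance] CategoryTheory.Abelian.hasFiniteBiproducts

/-- Objects of the category `FI_G`: natural numbers (bundled). -/
structure FIG (G : Type) where
  n : ℕ

variable {G : Type}

/-- The category `FI_G`: a morphism `X ⟶ Y` is a pair `(f, c)` where
`f : Fin X.n ↪ Fin Y.n` is an injective map and `c : Fin X.n → G` is arbitrary,
with composition `(f₂,c₂) ∘ (f₁,c₁) = (f₂ ∘ f₁, t ↦ c₂(f₁ t) * c₁ t)`. -/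
instance FIG.category [Group G] : Category (FIG G) where
  Hom X Y := (Fin X.n ↪ Fin Y.n) × (Fin X.n → G)
  id X := ⟨Function.Embedding.refl _, fun _ => 1⟩
  comp f g := ⟨f.1.trans g.1, fun t => g.2 (f.1 t) * f.2 t⟩
  id_comp f := Prod.ext rfl (funext fun t => mul_one _)
  comp_id f := Prod.ext rfl (funext fun t => one_mul _)
  assoc f g h := by
    refine Prod.ext rfl ?_
    funext t
    dsimp
    rw [mul_assoc]
    rfl

/-- The free `FI_G`-module `kC e_n`, sending `m` to the free `k`-module
on the hom-set `FI_G(n, m)`. -/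
noncomputable def FIG.free (k : Type) [CommRing k] (G : Type) [Group G] (n : ℕ) :
    FIG G ⥤ ModuleCat k :=
  coyoneda.obj (Opposite.op ⟨n⟩) ⋙ ModuleCat.free k

/-- An `FI_G`-module is finitely generated if it admits an epimorphism from a
finite direct sum `⨁ᵢ kC e_{nᵢ}` of free modules. -/
noncomputable def FIG.FinGen (k : Type) [CommRing k] [Group G]
    (V : FIG G ⥤ ModuleCat k) : Prop :=
  ∃ (r : ℕ) (a : Fin r → ℕ) (p : (⨁ fun i : Fin r => FIG.free k G (a i)) ⟶ V), Epi p

/-- An `FI_G`-module `V` is finite dimensional if each `V(m)` is a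
finite-dimensional `k`-vector space and `V(m) = 0` for all but finitely many `m`. -/
def FIG.FinDim (k : Type) [Field k] [Group G] (V : FIG G ⥤ ModuleCat k) : Prop :=
  (∀ X : FIG G, Module.Finite k (V.obj X)) ∧
    ∃ N : ℕ, ∀ X : FIG G, N < X.n → IsZero (V.obj X)

/-- An `FI_G`-module `F` is torsion-free if `Hom(T, F) = 0` for every
finite-dimensional `FI_G`-module `T`. -/
def FIG.TorsionFree (k : Type) [Field k] [Group G] (F : FIG G ⥤ ModuleCat k) : Prop :=
  ∀ T : FIG G ⥤ ModuleCat k, FIG.FinDim k T → ∀ f : T ⟶ F, f = 0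

/-- Extension of an injection `f : Fin m ↪ Fin n` to `Fin (m+1) ↪ Fin (n+1)`,
sending `0 ↦ 0` and `t + 1 ↦ f t + 1`. -/
def FIG.extEmb {m n : ℕ} (f : Fin m ↪ Fin n) : Fin (m + 1) ↪ Fin (n + 1) where
  toFun := Fin.cons 0 (fun t => (f t).succ)
  inj' := by
    intro a b h
    induction a using Fin.cases with
    | zero =>
      induction b using Fin.cases with
      | zero => rfl
      | succ j =>
        simp only [Fin.cons_zero, Fin.cons_succ] at h
        exact absurd h.symm (Fin.succ_ne_zero _)
    | succ i =>
      induction b using Fin.cases with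
      | zero =>
        simp only [Fin.cons_zero, Fin.cons_succ] at h
        exact absurd h (Fin.succ_ne_zero _)
      | succ j =>
        simp only [Fin.cons_succ] at h
        exact congrArg Fin.succ (f.injective (Fin.succ_injective _ h))

/-- The functor `ι : FI_G → FI_G`, `ι(n) = 1 ⊙ n`: on objects `n ↦ n + 1`, and on
a morphism `(f, c)` it gives `(f', c')` with `f' 0 = 0`, `c' 0 = 1`,
`f' (t+1) = f t + 1` and `c' (t+1) = c t`. -/
def FIG.iota (G : Type) [Group G] : FIG G ⥤ FIG G where
  obj X := ⟨X.n + 1⟩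
  map f := ⟨FIG.extEmb f.1, Fin.cons 1 f.2⟩
  map_id X := by
    refine Prod.ext (DFunLike.ext _ _ fun t => ?_) (funext fun t => ?_) <;>
      induction t using Fin.cases <;> rfl
  map_comp {X Y Z} f g := by
    refine Prod.ext (DFunLike.ext _ _ fun t => ?_) (funext fun t => ?_) <;>
      induction t using Fin.cases
    · rfl
    · rfl
    · exact (one_mul 1).symm
    · rfl

/-- The shift functor `S : V ↦ V ∘ ι` on `FI_G`-modules. -/
def FIG.S (k : Type) [CommRing k] (G : Type) [Group G] :
    (FIG G ⥤ ModuleCat k) ⥤ (FIG G ⥤ ModuleCat k) :=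
  (Functor.whiskeringLeft (FIG G) (FIG G) (ModuleCat k)).obj (FIG.iota G)

namespace FIGProof

variable {G : Type} [Group G]

lemma hom_ext {X Y : FIG G} {f g : X ⟶ Y} (h1 : ∀ t, f.1 t = g.1 t)
    (h2 : ∀ t, f.2 t = g.2 t) : f = g :=
  Prod.ext (DFunLike.ext _ _ h1) (funext h2)

@[simp] lemma comp_fst {X Y Z : FIG G} (f : X ⟶ Y) (g : Y ⟶ Z) (t) :
    (f ≫ g).1 t = g.1 (f.1 t) := rfl

@[simp] lemma comp_snd {X Y Z : FIG G} (f : X ⟶ Y) (g : Y ⟶ Z) (t) :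
    (f ≫ g).2 t = g.2 (f.1 t) * f.2 t := rfl

@[simp] lemma id_fst (X : FIG G) (t) : (𝟙 X : X ⟶ X).1 t = t := rfl

@[simp] lemma id_snd (X : FIG G) (t) : (𝟙 X : X ⟶ X).2 t = 1 := rfl

/-- The standard morphism `m → N`. -/
def std {m N : ℕ} (h : m ≤ N) : (⟨m⟩ : FIG G) ⟶ ⟨N⟩ :=
  ⟨Fin.castLEEmb h, fun _ => 1⟩

@[simp] lemma std_fst {m N : ℕ} (h : m ≤ N) (t) :
    (std (G := G) h).1 t = Fin.castLE h t := rfl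

@[simp] lemma std_snd {m N : ℕ} (h : m ≤ N) (t) :
    (std (G := G) h).2 t = 1 := rfl

lemma std_comp {m N P : ℕ} (h1 : m ≤ N) (h2 : N ≤ P) :
    (std (G := G) h1) ≫ std h2 = std (h1.trans h2) :=
  hom_ext (fun t => rfl) (fun _ => one_mul 1)

lemma std_refl (N : ℕ) : (std (G := G) (le_refl N)) = 𝟙 (⟨N⟩ : FIG G) :=
  hom_ext (fun t => rfl) (fun _ => rfl)

/-- `f` covers all of the first `n` points of the target. -/
def Covers (n : ℕ) {X Y : FIG G} (f : X ⟶ Y) : Prop :=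
  ∀ q : Fin n, ∃ t, ((f.1 t : Fin Y.n) : ℕ) = (q : ℕ)

/-- `σ` fixes the first `n` points with trivial colors. -/
def Fix (n : ℕ) {Y : FIG G} (σ : Y ⟶ Y) : Prop :=
  ∀ t : Fin Y.n, (t : ℕ) < n → σ.1 t = t ∧ σ.2 t = 1

lemma fix_of_comp_std {n N : ℕ} (hn : n ≤ N) {σ : (⟨N⟩ : FIG G) ⟶ ⟨N⟩}
    (h : std hn ≫ σ = std hn) : Fix n σ := by
  intro t ht
  have h1 := congrArg (fun f => f.1 (⟨(t : ℕ), ht⟩ : Fin n)) h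
  have h2 := congrArg (fun f => f.2 (⟨(t : ℕ), ht⟩ : Fin n)) h
  exact ⟨h1, by have h3 : σ.2 ((std hn).1 ⟨↑t, ht⟩) = 1 := by simpa using h2
                exact h3⟩

lemma comp_std_of_fix {n N : ℕ} (hn : n ≤ N) {σ : (⟨N⟩ : FIG G) ⟶ ⟨N⟩}
    (h : Fix n σ) : std hn ≫ σ = std hn := by
  refine hom_ext (fun t => ?_) (fun t => ?_)
  · exact (h (Fin.castLE hn t) t.isLt).1
  · simp only [comp_snd, std_snd, mul_one]
    exact (h (Fin.castLE hn t) t.isLt).2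

lemma le_of_hom {X Y : FIG G} (f : X ⟶ Y) : X.n ≤ Y.n := by
  simpa using Fintype.card_le_of_embedding f.1

lemma exists_perm_comp {m N : ℕ} (e₁ e₂ : Fin m ↪ Fin N) :
    ∃ π : Equiv.Perm (Fin N), ∀ t, π (e₁ t) = e₂ t := by
  classical
  have h1 : Fintype.card {x // x ∈ Set.range e₁} = m := by
    rw [Fintype.card_congr (Equiv.ofInjective e₁ e₁.injective).symm, Fintype.card_fin]
  have h2 : Fintype.card {x // x ∈ Set.range e₂} = m := by
    rw [Fintype.card_congr (Equiv.ofInjective e₂ e₂.injective).symm, Fintype.card_fin]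
  have hc : Fintype.card {x // ¬ x ∈ Set.range e₁} = Fintype.card {x // ¬ x ∈ Set.range e₂} := by
    rw [Fintype.card_subtype_compl, Fintype.card_subtype_compl, h1, h2]
  let E1 : {x // x ∈ Set.range e₁} ≃ {x // x ∈ Set.range e₂} :=
    (Equiv.ofInjective e₁ e₁.injective).symm.trans (Equiv.ofInjective e₂ e₂.injective)
  let E2 : {x // ¬ x ∈ Set.range e₁} ≃ {x // ¬ x ∈ Set.range e₂} := Fintype.equivOfCardEq hc
  refine ⟨((Equiv.sumCompl (· ∈ Set.range e₁)).symm.trans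
    (Equiv.sumCongr E1 E2)).trans (Equiv.sumCompl (· ∈ Set.range e₂)), fun t => ?_⟩
  have hmem : e₁ t ∈ Set.range e₁ := ⟨t, rfl⟩
  simp only [Equiv.trans_apply]
  rw [Equiv.sumCompl_symm_apply_of_pos hmem]
  simp only [Equiv.sumCongr_apply, Sum.map_inl, Equiv.sumCompl_apply_inl]
  show ((Equiv.ofInjective e₂ e₂.injective) ((Equiv.ofInjective e₁ e₁.injective).symm ⟨e₁ t, hmem⟩) : Fin N) = e₂ t
  have : (⟨e₁ t, hmem⟩ : {x // x ∈ Set.range e₁}) = Equiv.ofInjective e₁ e₁.injective t := by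
    ext; rfl
  rw [this, Equiv.symm_apply_apply]
  rfl

lemma exists_inv {Y : FIG G} (σ : Y ⟶ Y) :
    ∃ σ' : Y ⟶ Y, σ ≫ σ' = 𝟙 Y ∧ σ' ≫ σ = 𝟙 Y := by
  have hbij : Function.Bijective σ.1 := Finite.injective_iff_bijective.mp σ.1.injective
  let e := Equiv.ofBijective σ.1 hbij
  refine ⟨⟨e.symm.toEmbedding, fun y => (σ.2 (e.symm y))⁻¹⟩,
    hom_ext (fun t => ?_) (fun t => ?_), hom_ext (fun y => ?_) (fun y => ?_)⟩
  · show e.symm (σ.1 t) = t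
    exact e.symm_apply_apply t
  · show (σ.2 (e.symm (σ.1 t)))⁻¹ * σ.2 t = 1
    rw [show σ.1 t = e t from rfl, e.symm_apply_apply]
    group
  · show σ.1 (e.symm y) = y
    exact e.apply_symm_apply y
  · show σ.2 (e.symm y) * (σ.2 (e.symm y))⁻¹ = 1
    group

lemma exists_aut {m N : ℕ} (f g : (⟨m⟩ : FIG G) ⟶ ⟨N⟩) :
    ∃ σ σ' : (⟨N⟩ : FIG G) ⟶ ⟨N⟩, f ≫ σ = g ∧ σ ≫ σ' = 𝟙 _ ∧ σ' ≫ σ = 𝟙 _ := by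
  classical
  obtain ⟨π, hπ⟩ := exists_perm_comp f.1 g.1
  let c : Fin N → G := Function.extend f.1 (fun t => g.2 t * (f.2 t)⁻¹) (fun _ => 1)
  let σ : (⟨N⟩ : FIG G) ⟶ ⟨N⟩ := ⟨π.toEmbedding, c⟩
  have hfσ : f ≫ σ = g := by
    refine hom_ext (fun t => hπ t) (fun t => ?_)
    show c (f.1 t) * f.2 t = g.2 t
    rw [show c (f.1 t) = g.2 t * (f.2 t)⁻¹ from f.1.injective.extend_apply _ _ t]
    group
  obtain ⟨σ', h1, h2⟩ := exists_inv σ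
  exact ⟨σ, σ', hfσ, h1, h2⟩

lemma exists_fix_factor {n N M : ℕ} (hNM : N ≤ M) (hn : n ≤ N) (g : (⟨N⟩ : FIG G) ⟶ ⟨M⟩)
    (hg : std hn ≫ g = std (hn.trans hNM)) :
    ∃ τ τ' : (⟨M⟩ : FIG G) ⟶ ⟨M⟩, std hNM ≫ τ = g ∧ Fix n τ ∧ τ ≫ τ' = 𝟙 _ ∧ τ' ≫ τ = 𝟙 _ := by
  obtain ⟨σ, σ', h1, h2, h3⟩ := exists_aut (std hNM) g
  refine ⟨σ, σ', h1, fix_of_comp_std (hn.trans hNM) ?_, h2, h3⟩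
  have e1 : (std (hn.trans hNM) : (⟨n⟩ : FIG G) ⟶ ⟨M⟩) ≫ σ = std hn ≫ (std hNM ≫ σ) := by
    rw [← Category.assoc, std_comp]
  rw [e1, h1, hg]

lemma exists_factor_of_covers {n : ℕ} {X Y : FIG G} (f : X ⟶ Y) (hn : n ≤ Y.n)
    (h : Covers n f) : ∃ ρ : (⟨n⟩ : FIG G) ⟶ X, ρ ≫ f = std hn := by
  choose t ht using h
  have hinj : Function.Injective t := by
    intro q1 q2 hq
    have : ((f.1 (t q1) : Fin Y.n) : ℕ) = ((f.1 (t q2) : Fin Y.n) : ℕ) := by rw [hq]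
    rw [ht q1, ht q2] at this
    exact Fin.ext this
  refine ⟨⟨⟨t, hinj⟩, fun q => (f.2 (t q))⁻¹⟩, hom_ext (fun q => ?_) (fun q => ?_)⟩
  · exact Fin.ext (ht q)
  · show f.2 (t q) * (f.2 (t q))⁻¹ = 1
    group

end FIGProof

namespace FIGProof

attribute [local instance] Classical.propDecidable

variable {G : Type} [Group G]

section Modules

variable (k : Type) [Field k]

/-- The submodule of `V(N)` generated by images of maps not covering the first `n` points. -/
def Jsub (V : FIG G ⥤ ModuleCat.{0} k) (n N : ℕ) : Submodule k (V.obj ⟨N⟩) :=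
  Submodule.span k {y | ∃ (X : FIG G) (α : X ⟶ ⟨N⟩) (c : V.obj X), ¬ Covers n α ∧ V.map α c = y}

lemma mem_Jsub (V : FIG G ⥤ ModuleCat.{0} k) (n N : ℕ) {X : FIG G} (α : X ⟶ ⟨N⟩)
    (hα : ¬ Covers n α) (c : V.obj X) : V.map α c ∈ Jsub k V n N :=
  Submodule.subset_span ⟨X, α, c, hα, rfl⟩

lemma map_comp_apply (V : FIG G ⥤ ModuleCat.{0} k) {X Y Z : FIG G} (f : X ⟶ Y) (g : Y ⟶ Z)
    (x : V.obj X) : V.map (f ≫ g) x = V.map g (V.map f x) := by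
  rw [V.map_comp]; rfl

/-- The subtype of automorphisms fixing the first `n` points (the stabilizer). -/
abbrev HTy (G : Type) [Group G] (n N : ℕ) : Type := {σ : (⟨N⟩ : FIG G) ⟶ ⟨N⟩ // Fix n σ}

instance homFinite [Finite G] (X Y : FIG G) : Finite (X ⟶ Y) :=
  inferInstanceAs (Finite ((Fin X.n ↪ Fin Y.n) × (Fin X.n → G)))

noncomputable instance [Finite G] (n N : ℕ) : Fintype (HTy G n N) := Fintype.ofFinite _

instance (n N : ℕ) : Nonempty (HTy G n N) :=
  ⟨⟨𝟙 _, fun t _ => ⟨rfl, rfl⟩⟩⟩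

lemma fix_comp {n : ℕ} {Y : FIG G} {σ τ : Y ⟶ Y} (hσ : Fix n σ) (hτ : Fix n τ) :
    Fix n (σ ≫ τ) := by
  intro t ht
  constructor
  · show τ.1 (σ.1 t) = t
    rw [(hσ t ht).1, (hτ t ht).1]
  · show τ.2 (σ.1 t) * σ.2 t = 1
    rw [(hσ t ht).1, (hτ t ht).2, (hσ t ht).2, one_mul]

lemma fix_inv {n : ℕ} {Y : FIG G} {σ σ' : Y ⟶ Y} (hσ : Fix n σ) (h1 : σ' ≫ σ = 𝟙 Y) :
    Fix n σ' := by
  intro t ht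
  have e1 : σ.1 (σ'.1 t) = t := congrArg (fun f => f.1 t) h1
  have h2 : σ.1 (σ'.1 t) = σ.1 t := by rw [e1, (hσ t ht).1]
  have hemb : σ'.1 t = t := σ.1.injective h2
  refine ⟨hemb, ?_⟩
  have e2 : σ.2 (σ'.1 t) * σ'.2 t = 1 := congrArg (fun f => f.2 t) h1
  rw [hemb, (hσ t ht).2, one_mul] at e2
  exact e2

/-- The subspace spanned by elements `σ·v - v` for `σ` in the stabilizer. -/
def Rsub (V : FIG G ⥤ ModuleCat.{0} k) (n N : ℕ) : Submodule k (V.obj ⟨N⟩) :=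
  Submodule.span k {y | ∃ (σ : HTy G n N) (v : V.obj ⟨N⟩), V.map σ.1 v - v = y}

lemma mem_Rsub (V : FIG G ⥤ ModuleCat.{0} k) (n N : ℕ) (σ : HTy G n N) (v : V.obj ⟨N⟩) :
    V.map σ.1 v - v ∈ Rsub k V n N :=
  Submodule.subset_span ⟨σ, v, rfl⟩

/-- `W = J ⊔ R`. -/
def Wsub (V : FIG G ⥤ ModuleCat.{0} k) (n N : ℕ) : Submodule k (V.obj ⟨N⟩) :=
  Jsub k V n N ⊔ Rsub k V n N

/-- The averaging operator over the stabilizer. -/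
noncomputable def avg [Finite G] (V : FIG G ⥤ ModuleCat.{0} k) (n N : ℕ) :
    V.obj ⟨N⟩ →ₗ[k] V.obj ⟨N⟩ :=
  (Nat.card (HTy G n N) : k)⁻¹ • ∑ σ : HTy G n N, (V.map σ.1).hom

end Modules

end FIGProof

namespace FIGProof

attribute [local instance] Classical.propDecidable

variable {G : Type} [Group G]

section Avg

variable (k : Type) [Field k] [Finite G] (V : FIG G ⥤ ModuleCat.{0} k) (n N : ℕ)

lemma avg_apply (x : V.obj ⟨N⟩) :
    avg k V n N x = (Nat.card (HTy G n N) : k)⁻¹ • ∑ σ : HTy G n N, V.map σ.1 x := by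
  unfold avg
  rw [LinearMap.smul_apply, LinearMap.sum_apply]

lemma avg_map_fix (τ : HTy G n N) (x : V.obj ⟨N⟩) :
    avg k V n N (V.map τ.1 x) = avg k V n N x := by
  have hbij : Function.Bijective (fun σ : HTy G n N => (⟨τ.1 ≫ σ.1, fix_comp τ.2 σ.2⟩ : HTy G n N)) := by
    obtain ⟨τ', hτ1, hτ2⟩ := exists_inv τ.1
    have hfixτ' : Fix n τ' := fix_inv τ.2 hτ2
    constructor
    · intro σ1 σ2 h
      have h' : τ.1 ≫ σ1.1 = τ.1 ≫ σ2.1 := congrArg Subtype.val h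
      apply Subtype.ext
      calc σ1.1 = 𝟙 _ ≫ σ1.1 := by rw [Category.id_comp]
        _ = τ' ≫ τ.1 ≫ σ1.1 := by rw [← hτ2, Category.assoc]
        _ = τ' ≫ τ.1 ≫ σ2.1 := by rw [h']
        _ = σ2.1 := by rw [← Category.assoc, hτ2, Category.id_comp]
    · intro σ
      refine ⟨⟨τ' ≫ σ.1, fix_comp hfixτ' σ.2⟩, Subtype.ext ?_⟩
      show τ.1 ≫ τ' ≫ σ.1 = σ.1
      rw [← Category.assoc, hτ1, Category.id_comp]
  rw [avg_apply, avg_apply]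
  congr 1
  calc ∑ σ : HTy G n N, V.map σ.1 (V.map τ.1 x)
      = ∑ σ : HTy G n N, V.map (τ.1 ≫ σ.1) x :=
        Finset.sum_congr rfl (fun σ _ => (map_comp_apply k V τ.1 σ.1 x).symm)
    _ = ∑ σ : HTy G n N, V.map σ.1 x :=
        Fintype.sum_bijective _ hbij _ _ (fun σ => rfl)

lemma avg_sub_self_mem [CharZero k] (x : V.obj ⟨N⟩) :
    avg k V n N x - x ∈ Rsub k V n N := by
  have hcard : (Nat.card (HTy G n N) : k) ≠ 0 := by
    have : 0 < Nat.card (HTy G n N) := Nat.card_pos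
    exact_mod_cast Nat.cast_ne_zero.mpr this.ne'
  have key : avg k V n N x - x
      = (Nat.card (HTy G n N) : k)⁻¹ • ∑ σ : HTy G n N, (V.map σ.1 x - x) := by
    rw [Finset.sum_sub_distrib, smul_sub, avg_apply]
    congr 1
    rw [Finset.sum_const, Finset.card_univ, ← Nat.card_eq_fintype_card,
      ← Nat.cast_smul_eq_nsmul k, smul_smul, inv_mul_cancel₀ hcard, one_smul]
  rw [key]
  refine Submodule.smul_mem _ _ (Submodule.sum_mem _ (fun σ _ => mem_Rsub k V n N σ x))

lemma avg_map_of_mem_Rsub (x : V.obj ⟨N⟩) (hx : x ∈ Rsub k V n N) :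
    avg k V n N x = 0 := by
  refine Submodule.span_induction ?_ ?_ ?_ ?_ hx
  · rintro y ⟨σ, v, rfl⟩
    rw [map_sub, avg_map_fix k V n N σ v, sub_self]
  · exact map_zero _
  · intro y z _ _ hy hz
    rw [map_add, hy, hz, add_zero]
  · intro c y _ hy
    rw [map_smul, hy, smul_zero]

end Avg

end FIGProof

namespace FIGProof

attribute [local instance] Classical.propDecidable

variable {G : Type} [Group G]

section Jstab

variable (k : Type) [Field k]

lemma covers_comp_std_iff {n : ℕ} {X : FIG G} {N M : ℕ} (f : X ⟶ ⟨N⟩) (h : N ≤ M) :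
    Covers n (f ≫ (std h : (⟨N⟩ : FIG G) ⟶ ⟨M⟩)) ↔ Covers n f := by
  constructor <;> intro hc q <;> obtain ⟨t, ht⟩ := hc q <;> exact ⟨t, ht⟩

lemma covers_of_comp_fix {n : ℕ} {X : FIG G} {N : ℕ} (hn : n ≤ N) (f : X ⟶ ⟨N⟩)
    {σ : (⟨N⟩ : FIG G) ⟶ ⟨N⟩} (hσ : Fix n σ) (hc : Covers n (f ≫ σ)) : Covers n f := by
  intro q
  obtain ⟨t, ht⟩ := hc q
  set p : Fin N := ⟨(q : ℕ), lt_of_lt_of_le q.isLt hn⟩ with hp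
  have hfix : σ.1 p = p := (hσ p q.isLt).1
  have h1 : σ.1 (f.1 t) = p := by
    apply Fin.ext
    exact ht
  have h2 : f.1 t = p := σ.1.injective (by rw [h1, hfix])
  exact ⟨t, congrArg Fin.val h2⟩

lemma not_covers_std {n N M : ℕ} (h : N ≤ M) (hN : N < n) :
    ¬ Covers n (std h : (⟨N⟩ : FIG G) ⟶ ⟨M⟩) := by
  intro hc
  obtain ⟨t, ht⟩ := hc ⟨N, hN⟩
  have h1 : (t : ℕ) < N := t.isLt
  have h2 : (t : ℕ) = N := ht
  omega

lemma map_Jsub_std (V : FIG G ⥤ ModuleCat.{0} k) {n N M : ℕ} (h : N ≤ M) {x : V.obj ⟨N⟩}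
    (hx : x ∈ Jsub k V n N) : V.map (std h) x ∈ Jsub k V n M := by
  refine Submodule.span_induction ?_ ?_ ?_ ?_ hx
  · rintro y ⟨X, α, c, hα, rfl⟩
    rw [← map_comp_apply]
    exact mem_Jsub k V n M _ (fun hcc => hα ((covers_comp_std_iff α h).mp hcc)) c
  · rw [map_zero]; exact Submodule.zero_mem _
  · intro y z _ _ hy hz
    rw [map_add]; exact Submodule.add_mem _ hy hz
  · intro c y _ hy
    rw [map_smul]; exact Submodule.smul_mem _ _ hy

lemma map_Jsub_fix (V : FIG G ⥤ ModuleCat.{0} k) {n N : ℕ} (hn : n ≤ N)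
    {σ : (⟨N⟩ : FIG G) ⟶ ⟨N⟩} (hσ : Fix n σ) {x : V.obj ⟨N⟩}
    (hx : x ∈ Jsub k V n N) : V.map σ x ∈ Jsub k V n N := by
  refine Submodule.span_induction ?_ ?_ ?_ ?_ hx
  · rintro y ⟨X, α, c, hα, rfl⟩
    rw [← map_comp_apply]
    exact mem_Jsub k V n N _ (fun hcc => hα (covers_of_comp_fix hn α hσ hcc)) c
  · rw [map_zero]; exact Submodule.zero_mem _
  · intro y z _ _ hy hz
    rw [map_add]; exact Submodule.add_mem _ hy hz
  · intro c y _ hy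
    rw [map_smul]; exact Submodule.smul_mem _ _ hy

lemma avg_mem_Jsub [Finite G] (V : FIG G ⥤ ModuleCat.{0} k) {n N : ℕ} (hn : n ≤ N)
    {x : V.obj ⟨N⟩} (hx : x ∈ Jsub k V n N) : avg k V n N x ∈ Jsub k V n N := by
  rw [avg_apply]
  exact Submodule.smul_mem _ _ (Submodule.sum_mem _
    (fun σ _ => map_Jsub_fix k V hn σ.2 hx))

lemma map_Wsub_std (V : FIG G ⥤ ModuleCat.{0} k) {n N M : ℕ} (h : N ≤ M) {x : V.obj ⟨N⟩}
    (hx : x ∈ Wsub k V n N) : V.map (std h) x ∈ Wsub k V n M := by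
  by_cases hn : n ≤ N
  · obtain ⟨xj, hxj, xr, hxr, rfl⟩ := Submodule.mem_sup.mp hx
    rw [map_add]
    refine Submodule.add_mem _
      (Submodule.mem_sup_left (map_Jsub_std k V h hxj)) ?_
    have : ∀ y ∈ Rsub k V n N, V.map (std h) y ∈ Wsub k V n M := by
      intro y hy
      refine Submodule.span_induction ?_ ?_ ?_ ?_ hy
      · rintro z ⟨σ, v, rfl⟩
        have hg : std hn ≫ (σ.1 ≫ std h) = std (hn.trans h) := by
          rw [← Category.assoc, comp_std_of_fix hn σ.2, std_comp]
        obtain ⟨τ, τ', hτ1, hτfix, _, _⟩ := exists_fix_factor h hn (σ.1 ≫ std h) hg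
        rw [map_sub, ← map_comp_apply, ← hτ1, map_comp_apply]
        exact Submodule.mem_sup_right (mem_Rsub k V n M ⟨τ, hτfix⟩ (V.map (std h) v))
      · rw [map_zero]; exact Submodule.zero_mem _
      · intro y z _ _ hy hz
        rw [map_add]; exact Submodule.add_mem _ hy hz
      · intro c y _ hy
        rw [map_smul]; exact Submodule.smul_mem _ _ hy
    exact this xr hxr
  · have : V.map (std h) x ∈ Jsub k V n M :=
      mem_Jsub k V n M (std h) (not_covers_std h (by omega)) x
    exact Submodule.mem_sup_left this

lemma app_Jsub {A B : FIG G ⥤ ModuleCat.{0} k} (u : A ⟶ B) {n N : ℕ} {x : A.obj ⟨N⟩}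
    (hx : x ∈ Jsub k A n N) : u.app ⟨N⟩ x ∈ Jsub k B n N := by
  refine Submodule.span_induction ?_ ?_ ?_ ?_ hx
  · rintro y ⟨X, α, c, hα, rfl⟩
    have hnat := congrArg (fun (f : A.obj X ⟶ B.obj ⟨N⟩) => f c) (u.naturality α)
    have : u.app ⟨N⟩ (A.map α c) = B.map α (u.app X c) := hnat
    rw [this]
    exact mem_Jsub k B n N α hα _
  · rw [map_zero]; exact Submodule.zero_mem _
  · intro y z _ _ hy hz
    rw [map_add]; exact Submodule.add_mem _ hy hz
  · intro c y _ hy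
    rw [map_smul]; exact Submodule.smul_mem _ _ hy

lemma app_Rsub {A B : FIG G ⥤ ModuleCat.{0} k} (u : A ⟶ B) {n N : ℕ} {x : A.obj ⟨N⟩}
    (hx : x ∈ Rsub k A n N) : u.app ⟨N⟩ x ∈ Rsub k B n N := by
  refine Submodule.span_induction ?_ ?_ ?_ ?_ hx
  · rintro y ⟨σ, v, rfl⟩
    have hnat := congrArg (fun (f : A.obj ⟨N⟩ ⟶ B.obj ⟨N⟩) => f v) (u.naturality σ.1)
    have : u.app ⟨N⟩ (A.map σ.1 v) = B.map σ.1 (u.app ⟨N⟩ v) := hnat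
    rw [map_sub, this]
    exact mem_Rsub k B n N σ _
  · rw [map_zero]; exact Submodule.zero_mem _
  · intro y z _ _ hy hz
    rw [map_add]; exact Submodule.add_mem _ hy hz
  · intro c y _ hy
    rw [map_smul]; exact Submodule.smul_mem _ _ hy

lemma app_Wsub {A B : FIG G ⥤ ModuleCat.{0} k} (u : A ⟶ B) {n N : ℕ} {x : A.obj ⟨N⟩}
    (hx : x ∈ Wsub k A n N) : u.app ⟨N⟩ x ∈ Wsub k B n N := by
  obtain ⟨xj, hxj, xr, hxr, rfl⟩ := Submodule.mem_sup.mp hx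
  rw [map_add]
  exact Submodule.add_mem _ (Submodule.mem_sup_left (app_Jsub k u hxj))
    (Submodule.mem_sup_right (app_Rsub k u hxr))

end Jstab

end FIGProof

namespace FIGProof

attribute [local instance] Classical.propDecidable

variable {G : Type} [Group G]

section Beta

/-- The set of points among the first `n` covered by `α`. -/
noncomputable def covSet (n : ℕ) {X : FIG G} {M : ℕ} (α : X ⟶ ⟨M⟩) : Finset (Fin n) :=
  Finset.univ.filter (fun q => ∃ t, ((α.1 t : Fin M) : ℕ) = (q : ℕ))

lemma mem_covSet {n : ℕ} {X : FIG G} {M : ℕ} (α : X ⟶ ⟨M⟩) (q : Fin n) :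
    q ∈ covSet n α ↔ ∃ t, ((α.1 t : Fin M) : ℕ) = (q : ℕ) := by
  simp [covSet]

lemma covSet_ne_univ {n : ℕ} {X : FIG G} {M : ℕ} {α : X ⟶ ⟨M⟩} (hα : ¬ Covers n α) :
    covSet n α ≠ Finset.univ := by
  intro h
  exact hα (fun q => (mem_covSet α q).mp (h ▸ Finset.mem_univ q))

/-- The embedding underlying `beta`. -/
noncomputable def betaFun {M n : ℕ} (Q : Finset (Fin n)) (j : Fin M) : Fin (M + n) :=
  if h : ∃ q ∈ Q, ((q : ℕ) = (j : ℕ)) then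
    ⟨M + (j : ℕ), by obtain ⟨q, -, hq⟩ := h; have := q.isLt; omega⟩
  else ⟨(j : ℕ), by have := j.isLt; omega⟩

lemma betaFun_injective {M n : ℕ} (Q : Finset (Fin n)) :
    Function.Injective (betaFun (M := M) Q) := by
  intro j1 j2 heq
  unfold betaFun at heq
  split_ifs at heq with h1 h2 h2 <;> rw [Fin.mk.injEq] at heq
  · exact Fin.ext (by omega)
  · exact absurd heq (by have := j2.isLt; omega)
  · exact absurd heq (by have := j1.isLt; omega)
  · exact Fin.ext heq

/-- The morphism `M → M + n` moving the points of `Q` out of the way. -/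
noncomputable def beta {M n : ℕ} (Q : Finset (Fin n)) : (⟨M⟩ : FIG G) ⟶ ⟨M + n⟩ :=
  ⟨⟨betaFun Q, betaFun_injective Q⟩, fun _ => 1⟩

lemma beta_empty {M n : ℕ} : (beta (∅ : Finset (Fin n)) : (⟨M⟩ : FIG G) ⟶ ⟨M + n⟩)
    = std (Nat.le_add_right M n) := by
  refine hom_ext (fun j => Fin.ext ?_) (fun j => rfl)
  show ((betaFun (∅ : Finset (Fin n)) j : Fin (M + n)) : ℕ) = (j : ℕ)
  unfold betaFun
  rw [dif_neg (by simp)]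

lemma not_covers_beta {M n : ℕ} (hn : n ≤ M) {Q : Finset (Fin n)} (hQ : Q.Nonempty) :
    ¬ Covers n (beta Q : (⟨M⟩ : FIG G) ⟶ ⟨M + n⟩) := by
  intro hc
  obtain ⟨q0, hq0⟩ := hQ
  obtain ⟨t, ht⟩ := hc q0
  have ht' : (betaFun Q t : Fin (M + n)).val = (q0 : ℕ) := ht
  unfold betaFun at ht'
  split_ifs at ht' with h
  · have := q0.isLt
    simp only at ht'
    omega
  · exact h ⟨q0, hq0, ht'.symm⟩

lemma comp_beta_covSet {n : ℕ} {X : FIG G} {M : ℕ} (α : X ⟶ ⟨M⟩) (Q : Finset (Fin n)) :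
    α ≫ (beta Q : (⟨M⟩ : FIG G) ⟶ ⟨M + n⟩) = α ≫ beta (Q ∩ covSet n α) := by
  refine hom_ext (fun t => ?_) (fun t => rfl)
  show betaFun Q (α.1 t) = betaFun (Q ∩ covSet n α) (α.1 t)
  have hiff : (∃ q ∈ Q, ((q : ℕ) = ((α.1 t : Fin M) : ℕ)))
      ↔ (∃ q ∈ Q ∩ covSet n α, ((q : ℕ) = ((α.1 t : Fin M) : ℕ))) := by
    constructor
    · rintro ⟨q, hq, he⟩
      exact ⟨q, Finset.mem_inter.mpr ⟨hq, (mem_covSet α q).mpr ⟨t, he.symm⟩⟩, he⟩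
    · rintro ⟨q, hq, he⟩
      exact ⟨q, (Finset.mem_inter.mp hq).1, he⟩
  unfold betaFun
  by_cases h : ∃ q ∈ Q, ((q : ℕ) = ((α.1 t : Fin M) : ℕ))
  · rw [dif_pos h, dif_pos (hiff.mp h)]
  · rw [dif_neg h, dif_neg (fun hh => h (hiff.mpr hh))]

lemma sum_powerset_neg_one_field (k : Type) [Field k] {α : Type} (x : Finset α)
    (h0 : x.Nonempty) : ∑ m ∈ x.powerset, (-1 : k) ^ m.card = 0 := by
  have h := Finset.sum_powerset_neg_one_pow_card_of_nonempty h0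
  have h2 := congrArg (fun z : ℤ => (z : k)) h
  push_cast at h2
  simpa using h2

lemma sum_powerset_cancel (k : Type) [Field k] {n : ℕ} {P : Type} [AddCommGroup P]
    [Module k P] (S : Finset (Fin n)) (hS : S ≠ Finset.univ) (g : Finset (Fin n) → P) :
    ∑ Q : Finset (Fin n), ((-1 : k) ^ Q.card) • g (Q ∩ S) = 0 := by
  have hSc : Sᶜ ≠ ∅ := by
    intro h
    exact hS (by rwa [Finset.compl_eq_empty_iff] at h)
  have step1 : ∑ Q : Finset (Fin n), ((-1 : k) ^ Q.card) • g (Q ∩ S)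
      = ∑ p ∈ S.powerset ×ˢ Sᶜ.powerset, ((-1 : k) ^ (p.1.card + p.2.card)) • g p.1 := by
    refine Finset.sum_nbij' (fun Q => (Q ∩ S, Q \ S)) (fun p => p.1 ∪ p.2) ?_ ?_ ?_ ?_ ?_
    · intro Q _
      refine Finset.mem_product.mpr ⟨Finset.mem_powerset.mpr Finset.inter_subset_right,
        Finset.mem_powerset.mpr ?_⟩
      intro a ha
      rw [Finset.mem_compl]
      exact (Finset.mem_sdiff.mp ha).2
    · intro p _
      exact Finset.mem_univ _
    · intro Q _
      ext a
      simp only [Finset.mem_union, Finset.mem_inter, Finset.mem_sdiff]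
      tauto
    · intro p hp
      obtain ⟨h1, h2⟩ := Finset.mem_product.mp hp
      have hA : p.1 ⊆ S := Finset.mem_powerset.mp h1
      have hB : ∀ a ∈ p.2, a ∉ S := fun a ha =>
        Finset.mem_compl.mp (Finset.mem_powerset.mp h2 ha)
      have e1 : (p.1 ∪ p.2) ∩ S = p.1 := by
        ext a
        simp only [Finset.mem_inter, Finset.mem_union]
        constructor
        · rintro ⟨ha | ha, haS⟩
          · exact ha
          · exact absurd haS (hB a ha)
        · intro ha
          exact ⟨Or.inl ha, hA ha⟩
      have e2 : (p.1 ∪ p.2) \ S = p.2 := by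
        ext a
        simp only [Finset.mem_sdiff, Finset.mem_union]
        constructor
        · rintro ⟨ha | ha, haS⟩
          · exact absurd (hA ha) haS
          · exact ha
        · intro ha
          exact ⟨Or.inr ha, hB a ha⟩
      exact Prod.ext e1 e2
    · intro Q _
      rw [Finset.card_inter_add_card_sdiff]
  rw [step1, Finset.sum_product]
  refine Finset.sum_eq_zero (fun A hA => ?_)
  have key : ∀ B : Finset (Fin n), ((-1 : k) ^ (A.card + B.card)) • g A
      = ((-1 : k) ^ B.card * (-1 : k) ^ A.card) • g A := by
    intro B
    rw [pow_add, mul_comm]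
  calc ∑ B ∈ Sᶜ.powerset, ((-1 : k) ^ (A.card + B.card)) • g A
      = ∑ B ∈ Sᶜ.powerset, ((-1 : k) ^ B.card * (-1 : k) ^ A.card) • g A :=
        Finset.sum_congr rfl (fun B _ => key B)
    _ = (∑ B ∈ Sᶜ.powerset, (-1 : k) ^ B.card * (-1 : k) ^ A.card) • g A :=
        (Finset.sum_smul).symm
    _ = ((∑ B ∈ Sᶜ.powerset, (-1 : k) ^ B.card) * (-1 : k) ^ A.card) • g A := by
        rw [Finset.sum_mul]
    _ = 0 := by
        rw [sum_powerset_neg_one_field k _ (Finset.nonempty_iff_ne_empty.mpr hSc), zero_mul,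
          zero_smul]

end Beta

section Theta

variable (k : Type) [Field k]

lemma theta_eq_zero (V : FIG G ⥤ ModuleCat.{0} k) {n M : ℕ} (hn : n ≤ M) {x : V.obj ⟨M⟩}
    (hx : x ∈ Jsub k V n M) :
    ∑ Q : Finset (Fin n), ((-1 : k) ^ Q.card) • V.map (beta Q : (⟨M⟩ : FIG G) ⟶ ⟨M + n⟩) x
      = 0 := by
  refine Submodule.span_induction ?_ ?_ ?_ ?_ hx
  · rintro y ⟨X, α, c, hα, rfl⟩
    have h1 : ∀ Q : Finset (Fin n),
        V.map (beta Q : (⟨M⟩ : FIG G) ⟶ ⟨M + n⟩) (V.map α c)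
          = V.map (α ≫ beta (Q ∩ covSet n α)) c := by
      intro Q
      rw [← comp_beta_covSet α Q, map_comp_apply]
    calc ∑ Q : Finset (Fin n), ((-1 : k) ^ Q.card) • V.map (beta Q : (⟨M⟩ : FIG G) ⟶ ⟨M + n⟩) (V.map α c)
        = ∑ Q : Finset (Fin n), ((-1 : k) ^ Q.card)
            • V.map (α ≫ (beta (Q ∩ covSet n α) : (⟨M⟩ : FIG G) ⟶ ⟨M + n⟩)) c :=
          Finset.sum_congr rfl (fun Q _ => by rw [h1 Q])
      _ = 0 := by
          have hcancel := sum_powerset_cancel k (P := ((V.obj ⟨M + n⟩ : ModuleCat.{0} k) : Type)) (covSet n α) (covSet_ne_univ hα)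
            (fun A : Finset (Fin n) => V.map (α ≫ (beta A : (⟨M⟩ : FIG G) ⟶ ⟨M + n⟩)) c)
          exact hcancel
  · simp
  · intro y z _ _ hy hz
    simp only [map_add, smul_add, Finset.sum_add_distrib, hy, hz, add_zero]
  · intro c y _ hy
    have h2 : ∀ Q : Finset (Fin n),
        ((-1 : k) ^ Q.card) • V.map (beta Q : (⟨M⟩ : FIG G) ⟶ ⟨M + n⟩) (c • y)
          = c • (((-1 : k) ^ Q.card) • V.map (beta Q : (⟨M⟩ : FIG G) ⟶ ⟨M + n⟩) y) := by
      intro Q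
      rw [map_smul, smul_comm]
    rw [Finset.sum_congr rfl (fun Q _ => h2 Q), ← Finset.smul_sum, hy, smul_zero]

/-- The key lemma: if `u x` lies in `J(B)` then the image of `x` at a higher
level lies in `J(A)`. -/
lemma key_lemma {A B : FIG G ⥤ ModuleCat.{0} k} (u : A ⟶ B) {n M : ℕ} (hn : n ≤ M)
    (hinj : Function.Injective (u.app ⟨M + n⟩)) (x : A.obj ⟨M⟩)
    (hx : u.app ⟨M⟩ x ∈ Jsub k B n M) :
    A.map (std (Nat.le_add_right M n)) x ∈ Jsub k A n (M + n) := by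
  have h0 := theta_eq_zero k B hn hx
  have h1 : ∀ Q : Finset (Fin n),
      B.map (beta Q : (⟨M⟩ : FIG G) ⟶ ⟨M + n⟩) (u.app ⟨M⟩ x)
        = u.app ⟨M + n⟩ (A.map (beta Q : (⟨M⟩ : FIG G) ⟶ ⟨M + n⟩) x) := by
    intro Q
    exact (congrArg (fun (f : A.obj ⟨M⟩ ⟶ B.obj ⟨M + n⟩) => f x)
      (u.naturality (beta Q : (⟨M⟩ : FIG G) ⟶ ⟨M + n⟩))).symm
  have h2 : u.app ⟨M + n⟩
      (∑ Q : Finset (Fin n), ((-1 : k) ^ Q.card) • A.map (beta Q : (⟨M⟩ : FIG G) ⟶ ⟨M + n⟩) x)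
        = 0 := by
    rw [map_sum]
    rw [← h0]
    refine Finset.sum_congr rfl (fun Q _ => ?_)
    rw [map_smul, ← h1 Q]
  have h3 : ∑ Q : Finset (Fin n), ((-1 : k) ^ Q.card)
      • A.map (beta Q : (⟨M⟩ : FIG G) ⟶ ⟨M + n⟩) x = 0 := by
    apply hinj
    rw [h2, map_zero]
  have h4 := Finset.add_sum_erase Finset.univ
    (fun Q : Finset (Fin n) => ((-1 : k) ^ Q.card)
      • A.map (beta Q : (⟨M⟩ : FIG G) ⟶ ⟨M + n⟩) x) (Finset.mem_univ ∅)
  rw [h3] at h4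
  simp only [Finset.card_empty, pow_zero, one_smul, beta_empty] at h4
  have h5 : A.map (std (Nat.le_add_right M n)) x
      = - ∑ Q ∈ Finset.univ.erase (∅ : Finset (Fin n)), ((-1 : k) ^ Q.card)
        • A.map (beta Q : (⟨M⟩ : FIG G) ⟶ ⟨M + n⟩) x :=
    eq_neg_of_add_eq_zero_left h4
  rw [h5]
  refine Submodule.neg_mem _ (Submodule.sum_mem _ (fun Q hQ => Submodule.smul_mem _ _ ?_))
  have hQne : Q.Nonempty := Finset.nonempty_iff_ne_empty.mpr (Finset.ne_of_mem_erase hQ)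
  exact mem_Jsub k A n (M + n) _ (not_covers_beta hn hQne) x

end Theta

end FIGProof

namespace FIGProof

variable {G : Type} [Group G]

section Phi

variable (k : Type) [Field k] [Finite G]

variable (V : FIG G ⥤ ModuleCat.{0} k) (n : ℕ)

/-- The levelwise quotients `V(N)/W_N`. -/
abbrev GQ (N : ℕ) : Type := V.obj ⟨N⟩ ⧸ Wsub k V n N

/-- Transition maps of the directed system. -/
def tr (i j : ℕ) (h : i ≤ j) : GQ k V n i →ₗ[k] GQ k V n j :=
  Submodule.mapQ _ _ (V.map (std h)).hom
    (fun x hx => Submodule.mem_comap.mpr (map_Wsub_std k V h hx))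

lemma tr_mk (i j : ℕ) (h : i ≤ j) (x : V.obj ⟨i⟩) :
    tr k V n i j h (Submodule.Quotient.mk x)
      = Submodule.Quotient.mk (V.map (std h) x) :=
  Submodule.mapQ_apply _ _ _ x

instance : DirectedSystem (GQ k V n) (fun i j h => tr k V n i j h) := by
  constructor
  · intro i x
    obtain ⟨y, rfl⟩ := Submodule.Quotient.mk_surjective _ x
    rw [tr_mk, std_refl, V.map_id]
    rfl
  · intro i j l hij hjl x
    obtain ⟨y, rfl⟩ := Submodule.Quotient.mk_surjective _ x
    rw [tr_mk, tr_mk, tr_mk, ← map_comp_apply, std_comp]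

/-- The colimit `Φ(V)`. -/
noncomputable abbrev Phi : Type := Module.DirectLimit (GQ k V n) (tr k V n)

/-- The canonical map `V(N) → Φ(V)`. -/
noncomputable def ofPhi (N : ℕ) : (V.obj ⟨N⟩ : Type) →ₗ[k] Phi k V n :=
  (Module.DirectLimit.of k ℕ (GQ k V n) (tr k V n) N).comp (Wsub k V n N).mkQ

lemma ofPhi_apply (N : ℕ) (x : V.obj ⟨N⟩) :
    ofPhi k V n N x = Module.DirectLimit.of k ℕ (GQ k V n) (tr k V n) N
      (Submodule.Quotient.mk x) := rfl

lemma ofPhi_map_std {N M : ℕ} (h : N ≤ M) (x : V.obj ⟨N⟩) :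
    ofPhi k V n M (V.map (std h) x) = ofPhi k V n N x := by
  rw [ofPhi_apply, ofPhi_apply, ← Module.DirectLimit.of_f (hij := h), tr_mk]

lemma ofPhi_eq_zero_of_mem_Wsub {N : ℕ} {x : V.obj ⟨N⟩} (hx : x ∈ Wsub k V n N) :
    ofPhi k V n N x = 0 := by
  rw [ofPhi_apply, (Submodule.Quotient.mk_eq_zero _).mpr hx, map_zero]

end Phi

section PhiMap

variable (k : Type) [Field k] [Finite G]

variable {A B : FIG G ⥤ ModuleCat.{0} k} (u : A ⟶ B) (n : ℕ)

/-- Functoriality of `Φ`. -/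
noncomputable def PhiMap : Phi k A n →ₗ[k] Phi k B n :=
  Module.DirectLimit.lift k ℕ (GQ k A n) (tr k A n)
    (fun N => Submodule.liftQ _ ((ofPhi k B n N).comp
        (u.app ⟨N⟩).hom)
      (fun x hx => by
        simp only [LinearMap.mem_ker, LinearMap.comp_apply]
        exact ofPhi_eq_zero_of_mem_Wsub k B n (app_Wsub k u hx)))
    (by
      intro i j hij x
      obtain ⟨y, rfl⟩ := Submodule.Quotient.mk_surjective _ x
      rw [tr_mk]
      rw [Submodule.liftQ_apply, Submodule.liftQ_apply]
      simp only [LinearMap.comp_apply]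
      have hnat : u.app ⟨j⟩ (A.map (std hij) y) = B.map (std hij) (u.app ⟨i⟩ y) :=
        congrArg (fun (f : A.obj ⟨i⟩ ⟶ B.obj ⟨j⟩) => f y) (u.naturality (std hij))
      rw [hnat, ofPhi_map_std])

lemma PhiMap_of (N : ℕ) (x : A.obj ⟨N⟩) :
    PhiMap k u n (ofPhi k A n N x) = ofPhi k B n N (u.app ⟨N⟩ x) := by
  rw [ofPhi_apply]
  unfold PhiMap
  rw [Module.DirectLimit.lift_of]
  simp only [Submodule.liftQ_apply, LinearMap.comp_apply]

lemma not_covers_id {n N : ℕ} (hN : N < n) : ¬ Covers n (𝟙 (⟨N⟩ : FIG G)) := by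
  intro hc
  obtain ⟨t, ht⟩ := hc ⟨N, hN⟩
  have h1 : (t : ℕ) < N := t.isLt
  have h2 : (t : ℕ) = N := ht
  omega

lemma top_mem_Jsub_of_lt {n N : ℕ} (hN : N < n) (V : FIG G ⥤ ModuleCat.{0} k)
    (x : V.obj ⟨N⟩) : x ∈ Jsub k V n N := by
  have : V.map (𝟙 _) x ∈ Jsub k V n N :=
    mem_Jsub k V n N (𝟙 _) (not_covers_id hN) x
  rwa [V.map_id] at this

lemma PhiMap_injective [CharZero k]
    (hinj : ∀ N : ℕ, Function.Injective (u.app ⟨N⟩)) :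
    Function.Injective (PhiMap k u n) := by
  have hker : ∀ z : Phi k A n, PhiMap k u n z = 0 → z = 0 := by
    intro z hz
    obtain ⟨N, x', hx'⟩ := Module.DirectLimit.exists_of z
    obtain ⟨x, rfl⟩ := Submodule.Quotient.mk_surjective _ x'
    rw [← ofPhi_apply] at hx'
    subst hx'
    rw [PhiMap_of, ofPhi_apply] at hz
    obtain ⟨j, hij, hj⟩ := Module.DirectLimit.of.zero_exact hz
    rw [tr_mk, Submodule.Quotient.mk_eq_zero] at hj
    -- `B.map (std hij) (u.app x) = u.app (A.map (std hij) x) ∈ W j`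
    have hnat : B.map (std hij) (u.app ⟨N⟩ x) = u.app ⟨j⟩ (A.map (std hij) x) :=
      (congrArg (fun (f : A.obj ⟨N⟩ ⟶ B.obj ⟨j⟩) => f x) (u.naturality (std hij))).symm
    rw [hnat] at hj
    set y : A.obj ⟨j⟩ := A.map (std hij) x with hy
    have hofz : ofPhi k A n N x = ofPhi k A n j y := (ofPhi_map_std k A n hij x).symm
    by_cases hn : n ≤ j
    · -- average, then use the key lemma
      obtain ⟨jb, hjb, rb, hrb, hdecomp⟩ := Submodule.mem_sup.mp hj
      have havg : u.app ⟨j⟩ (avg k A n j y) ∈ Jsub k B n j := by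
        have h1 : u.app ⟨j⟩ (avg k A n j y) = avg k B n j (u.app ⟨j⟩ y) := by
          rw [avg_apply, avg_apply, map_smul, map_sum]
          congr 1
          refine Finset.sum_congr rfl (fun σ _ => ?_)
          exact congrArg (fun (f : A.obj ⟨j⟩ ⟶ B.obj ⟨j⟩) => f y) (u.naturality σ.1)
        rw [h1, ← hdecomp, map_add, avg_map_of_mem_Rsub k B n j rb hrb, add_zero]
        exact avg_mem_Jsub k B hn hjb
      -- key lemma at level j
      have hkey : A.map (std (Nat.le_add_right j n)) (avg k A n j y)
          ∈ Jsub k A n (j + n) :=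
        key_lemma k u hn (hinj (j + n)) (avg k A n j y) havg
      -- conclude that the class of y dies at level j + n
      have hWmem : A.map (std (Nat.le_add_right j n)) y ∈ Wsub k A n (j + n) := by
        have hsplit : A.map (std (Nat.le_add_right j n)) y
            = A.map (std (Nat.le_add_right j n)) (avg k A n j y)
              - A.map (std (Nat.le_add_right j n)) (avg k A n j y - y) := by
          rw [map_sub]
          abel
        rw [hsplit]
        refine Submodule.sub_mem _ (Submodule.mem_sup_left hkey) ?_
        exact map_Wsub_std k A (Nat.le_add_right j n)
          (Submodule.mem_sup_right (avg_sub_self_mem k A n j y))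
      rw [hofz, ← ofPhi_map_std k A n (Nat.le_add_right j n) y,
        ofPhi_eq_zero_of_mem_Wsub k A n hWmem]
    · -- low level: everything is in `J`
      have : y ∈ Wsub k A n j :=
        Submodule.mem_sup_left (top_mem_Jsub_of_lt k (by omega) A y)
      rw [hofz, ofPhi_eq_zero_of_mem_Wsub k A n this]
  intro a b hab
  have : PhiMap k u n (a - b) = 0 := by rw [map_sub, hab, sub_self]
  have h0 := hker _ this
  rwa [sub_eq_zero] at h0

end PhiMap

end FIGProof

namespace FIGProof

variable {G : Type} [Group G]

section Lambda

variable (k : Type) [Field k] [Finite G]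

variable {A : FIG G ⥤ ModuleCat.{0} k} (n : ℕ) (η : A ⟶ FIG.free k G n)

/-- Identify the free module with a `Finsupp`. -/
noncomputable def fromFree {X : FIG G} :
    ((FIG.free k G n).obj X : Type) →ₗ[k] (((⟨n⟩ : FIG G) ⟶ X) →₀ k) :=
  LinearMap.id

lemma free_map_apply {X Y : FIG G} (g : X ⟶ Y) (v : (FIG.free k G n).obj X) :
    fromFree k n ((FIG.free k G n).map g v)
      = Finsupp.mapDomain (fun ψ : (⟨n⟩ : FIG G) ⟶ X => ψ ≫ g) (fromFree k n v) := by
  rfl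

lemma comp_right_injective {X Y : FIG G} (g : X ⟶ Y) :
    Function.Injective (fun ψ : (⟨n⟩ : FIG G) ⟶ X => ψ ≫ g) := by
  intro ψ1 ψ2 h
  have hemb : ∀ t, ψ1.1 t = ψ2.1 t := by
    intro t
    have := congrArg (fun f => f.1 t) h
    exact g.1.injective this
  refine hom_ext hemb (fun t => ?_)
  have := congrArg (fun f => f.2 t) h
  have h2 : g.2 (ψ1.1 t) * ψ1.2 t = g.2 (ψ2.1 t) * ψ2.2 t := this
  rw [hemb t] at h2
  exact mul_left_cancel h2

/-- The coefficient functional of `η` at the standard basis element. -/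
noncomputable def lamb (N : ℕ) : (A.obj ⟨N⟩ : Type) →ₗ[k] k :=
  if h : n ≤ N then
    (Finsupp.lapply (std h : (⟨n⟩ : FIG G) ⟶ ⟨N⟩)).comp
      (η.app ⟨N⟩).hom
  else 0

lemma lamb_apply {N : ℕ} (h : n ≤ N) (x : A.obj ⟨N⟩) :
    lamb k n η N x = fromFree k n (η.app ⟨N⟩ x) (std h) := by
  unfold lamb
  rw [dif_pos h]
  rfl

lemma lamb_kills_Jsub {N : ℕ} {x : A.obj ⟨N⟩} (hx : x ∈ Jsub k A n N) :
    lamb k n η N x = 0 := by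
  by_cases h : n ≤ N
  · refine Submodule.span_induction ?_ ?_ ?_ ?_ hx
    · rintro y ⟨X, α, c, hα, rfl⟩
      rw [lamb_apply k n η h]
      have hnat : η.app ⟨N⟩ (A.map α c) = (FIG.free k G n).map α (η.app X c) :=
        congrArg (fun (f : A.obj X ⟶ (FIG.free k G n).obj ⟨N⟩) => f c) (η.naturality α)
      rw [hnat, free_map_apply]
      refine Finsupp.mapDomain_notin_range _ _ (fun hmem => hα ?_)
      obtain ⟨ψ, hψ⟩ := hmem
      intro q
      refine ⟨ψ.1 q, ?_⟩
      have := congrArg (fun f => (f.1 q : Fin N)) hψ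
      have h2 : α.1 (ψ.1 q) = Fin.castLE h q := this
      rw [h2]
      rfl
    · exact map_zero _
    · intro y z _ _ hy hz
      rw [map_add, hy, hz, add_zero]
    · intro c y _ hy
      rw [map_smul, hy, smul_zero]
  · unfold lamb
    rw [dif_neg h]
    rfl

lemma lamb_kills_Rsub {N : ℕ} {x : A.obj ⟨N⟩} (hx : x ∈ Rsub k A n N) :
    lamb k n η N x = 0 := by
  by_cases h : n ≤ N
  · refine Submodule.span_induction ?_ ?_ ?_ ?_ hx
    · rintro y ⟨σ, v, rfl⟩
      rw [map_sub, lamb_apply k n η h, lamb_apply k n η h]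
      have hnat : η.app ⟨N⟩ (A.map σ.1 v) = (FIG.free k G n).map σ.1 (η.app ⟨N⟩ v) :=
        congrArg (fun (f : A.obj ⟨N⟩ ⟶ (FIG.free k G n).obj ⟨N⟩) => f v) (η.naturality σ.1)
      rw [hnat, free_map_apply]
      have hstd : (std h : (⟨n⟩ : FIG G) ⟶ ⟨N⟩) ≫ σ.1 = std h := comp_std_of_fix h σ.2
      have hval : (Finsupp.mapDomain (fun ψ : (⟨n⟩ : FIG G) ⟶ ⟨N⟩ => ψ ≫ σ.1)
          (fromFree k n (η.app ⟨N⟩ v))) (std h)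
          = (fromFree k n (η.app ⟨N⟩ v)) (std h) := by
        conv_lhs => rw [← hstd]
        exact Finsupp.mapDomain_apply (comp_right_injective n σ.1) _ (std h)
      rw [hval, sub_self]
    · exact map_zero _
    · intro y z _ _ hy hz
      rw [map_add, hy, hz, add_zero]
    · intro c y _ hy
      rw [map_smul, hy, smul_zero]
  · unfold lamb
    rw [dif_neg h]
    rfl

lemma lamb_kills_Wsub {N : ℕ} {x : A.obj ⟨N⟩} (hx : x ∈ Wsub k A n N) :
    lamb k n η N x = 0 := by
  obtain ⟨xj, hxj, xr, hxr, rfl⟩ := Submodule.mem_sup.mp hx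
  rw [map_add, lamb_kills_Jsub k n η hxj, lamb_kills_Rsub k n η hxr, add_zero]

lemma lamb_compat {N M : ℕ} (hNM : N ≤ M) (x : A.obj ⟨N⟩) :
    lamb k n η M (A.map (std hNM) x) = lamb k n η N x := by
  have hnat : η.app ⟨M⟩ (A.map (std hNM) x) = (FIG.free k G n).map (std hNM) (η.app ⟨N⟩ x) :=
    congrArg (fun (f : A.obj ⟨N⟩ ⟶ (FIG.free k G n).obj ⟨M⟩) => f x) (η.naturality (std hNM))
  by_cases hN : n ≤ N
  · rw [lamb_apply k n η (hN.trans hNM), lamb_apply k n η hN, hnat, free_map_apply]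
    have hstd : (std (hN.trans hNM) : (⟨n⟩ : FIG G) ⟶ ⟨M⟩) = std hN ≫ std hNM :=
      (std_comp hN hNM).symm
    rw [hstd]
    exact Finsupp.mapDomain_apply (comp_right_injective n (std hNM)) _ (std hN)
  · have hzero : lamb k n η N x = 0 := by
      unfold lamb; rw [dif_neg hN]; rfl
    rw [hzero]
    by_cases hM : n ≤ M
    · rw [lamb_apply k n η hM, hnat, free_map_apply]
      refine Finsupp.mapDomain_notin_range _ _ (fun hmem => ?_)
      obtain ⟨ψ, -⟩ := hmem
      exact hN (le_of_hom ψ)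
    · unfold lamb; rw [dif_neg hM]; rfl

/-- The induced functional on `Φ(A)`. -/
noncomputable def lambdaHat : Phi k A n →ₗ[k] k :=
  Module.DirectLimit.lift k ℕ (GQ k A n) (tr k A n)
    (fun N => Submodule.liftQ _ (lamb k n η N)
      (fun x hx => by
        simp only [LinearMap.mem_ker]
        exact lamb_kills_Wsub k n η hx))
    (by
      intro i j hij x
      obtain ⟨y, rfl⟩ := Submodule.Quotient.mk_surjective _ x
      rw [tr_mk, Submodule.liftQ_apply, Submodule.liftQ_apply]
      exact lamb_compat k n η hij y)

lemma lambdaHat_ofPhi (N : ℕ) (x : A.obj ⟨N⟩) :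
    lambdaHat k n η (ofPhi k A n N x) = lamb k n η N x := by
  rw [ofPhi_apply]
  unfold lambdaHat
  rw [Module.DirectLimit.lift_of, Submodule.liftQ_apply]

end Lambda

end FIGProof

namespace FIGProof

variable {G : Type} [Group G]

section Zeta

variable (k : Type) [Field k] [Finite G]

noncomputable instance homFintype (X Y : FIG G) : Fintype (X ⟶ Y) := Fintype.ofFinite _

variable (n : ℕ)

lemma exists_sig {X : FIG G} (ψ : (⟨n⟩ : FIG G) ⟶ X) :
    ∃ p : (X ⟶ X) × (X ⟶ X), std (le_of_hom ψ) ≫ p.1 = ψ ∧ p.1 ≫ p.2 = 𝟙 X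
      ∧ p.2 ≫ p.1 = 𝟙 X := by
  obtain ⟨σ, σ', h1, h2, h3⟩ :=
    exists_aut (std (le_of_hom ψ) : (⟨n⟩ : FIG G) ⟶ ⟨X.n⟩) (ψ : (⟨n⟩ : FIG G) ⟶ ⟨X.n⟩)
  exact ⟨(σ, σ'), h1, h2, h3⟩

/-- A chosen automorphism moving the standard morphism to `ψ`, with its inverse. -/
noncomputable def sig {X : FIG G} (ψ : (⟨n⟩ : FIG G) ⟶ X) : (X ⟶ X) × (X ⟶ X) :=
  (exists_sig n ψ).choose

lemma sig_spec1 {X : FIG G} (ψ : (⟨n⟩ : FIG G) ⟶ X) :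
    std (le_of_hom ψ) ≫ (sig n ψ).1 = ψ := (exists_sig n ψ).choose_spec.1

lemma sig_spec2 {X : FIG G} (ψ : (⟨n⟩ : FIG G) ⟶ X) :
    (sig n ψ).1 ≫ (sig n ψ).2 = 𝟙 X := (exists_sig n ψ).choose_spec.2.1

lemma sig_spec3 {X : FIG G} (ψ : (⟨n⟩ : FIG G) ⟶ X) :
    (sig n ψ).2 ≫ (sig n ψ).1 = 𝟙 X := (exists_sig n ψ).choose_spec.2.2

lemma comp_sig2 {X : FIG G} (ψ : (⟨n⟩ : FIG G) ⟶ X) :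
    ψ ≫ (sig n ψ).2 = std (le_of_hom ψ) := by
  have h : (std (le_of_hom ψ) ≫ (sig n ψ).1) ≫ (sig n ψ).2 = ψ ≫ (sig n ψ).2 := by
    rw [sig_spec1]
  rw [← h, Category.assoc, sig_spec2, Category.comp_id]

end Zeta

section FreeInjective

variable (k : Type) [Field k] [CharZero k] [Finite G]

theorem free_injective (n : ℕ) : CategoryTheory.Injective (FIG.free k G n) := by
  constructor
  intro A B η u hu
  classical
  -- pointwise injectivity of u
  have hinj : ∀ N : ℕ, Function.Injective (u.app (⟨N⟩ : FIG G)) := by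
    intro N
    have : Mono (u.app (⟨N⟩ : FIG G)) := inferInstance
    exact (ModuleCat.mono_iff_injective _).mp this
  obtain ⟨ginv, hginv⟩ := LinearMap.exists_leftInverse_of_injective (PhiMap k u n)
    (LinearMap.ker_eq_bot.mpr (PhiMap_injective k u n hinj))
  set μh : Phi k B n →ₗ[k] k := (lambdaHat k n η).comp ginv with hμh
  set mu : ∀ N : ℕ, (B.obj (⟨N⟩ : FIG G) : Type) →ₗ[k] k :=
    fun N => μh.comp (ofPhi k B n N) with hmu
  have mu_W : ∀ (N : ℕ) (x : B.obj (⟨N⟩ : FIG G)), x ∈ Wsub k B n N → mu N x = 0 := by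
    intro N x hx
    show μh (ofPhi k B n N x) = 0
    rw [ofPhi_eq_zero_of_mem_Wsub k B n hx, map_zero]
  have mu_u : ∀ (N : ℕ) (a : A.obj (⟨N⟩ : FIG G)),
      mu N (u.app (⟨N⟩ : FIG G) a) = lamb k n η N a := by
    intro N a
    show μh (ofPhi k B n N (u.app (⟨N⟩ : FIG G) a)) = _
    rw [← PhiMap_of k u n N a]
    show (lambdaHat k n η) (ginv (PhiMap k u n (ofPhi k A n N a))) = _
    have hg : ginv (PhiMap k u n (ofPhi k A n N a)) = ofPhi k A n N a :=
      congrArg (fun (f : Phi k A n →ₗ[k] Phi k A n) => f (ofPhi k A n N a)) hginv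
    rw [hg, lambdaHat_ofPhi]
  have mu_std : ∀ {N M : ℕ} (h : N ≤ M) (b : B.obj (⟨N⟩ : FIG G)),
      mu M (B.map (std h) b) = mu N b := by
    intro N M h b
    show μh (ofPhi k B n M (B.map (std h) b)) = μh (ofPhi k B n N b)
    rw [ofPhi_map_std]
  have mu_factor : ∀ {N M : ℕ} (hn : n ≤ N) (h : (⟨N⟩ : FIG G) ⟶ ⟨M⟩),
      (std hn ≫ h = std (hn.trans (le_of_hom h)))
      → ∀ b : B.obj (⟨N⟩ : FIG G), mu M (B.map h b) = mu N b := by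
    intro N M hn h hcompat b
    obtain ⟨τ, τ', hτ1, hτfix, _, _⟩ := exists_fix_factor (le_of_hom h) hn h hcompat
    have hb : B.map h b = B.map τ (B.map (std (le_of_hom h)) b) := by
      rw [← map_comp_apply, hτ1]
    rw [hb]
    set w : B.obj (⟨M⟩ : FIG G) := B.map (std (le_of_hom h)) b with hw
    have hdiff : B.map τ w - w ∈ Wsub k B n M :=
      Submodule.mem_sup_right (mem_Rsub k B n M ⟨τ, hτfix⟩ w)
    have h0 : mu M (B.map τ w) - mu M w = 0 := by
      rw [← map_sub]
      exact mu_W M _ hdiff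
    rw [sub_eq_zero.mp h0, hw]
    exact mu_std (le_of_hom h) b
  have mu_kill : ∀ {X : FIG G} {M : ℕ} (h : X ⟶ (⟨M⟩ : FIG G)), ¬ Covers n h
      → ∀ b : B.obj X, mu M (B.map h b) = 0 := by
    intro X M h hnc b
    exact mu_W M _ (Submodule.mem_sup_left (mem_Jsub k B n M h hnc b))
  -- definition of the extension
  set ζapp : ∀ X : FIG G, (B.obj X : Type) →ₗ[k] (((⟨n⟩ : FIG G) ⟶ X) →₀ k) := fun X =>
    ∑ ψ : (⟨n⟩ : FIG G) ⟶ X, (Finsupp.lsingle ψ).comp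
      ((mu X.n).comp ((B.map (sig n ψ).2).hom : (B.obj X : Type) →ₗ[k] B.obj (⟨X.n⟩ : FIG G)))
    with hζapp
  have ζapp_val : ∀ (X : FIG G) (b : B.obj X) (ψ' : (⟨n⟩ : FIG G) ⟶ X),
      ζapp X b ψ' = mu X.n (B.map (sig n ψ').2 b) := by
    intro X b ψ'
    rw [hζapp]
    rw [LinearMap.sum_apply, Finsupp.finset_sum_apply]
    simp only [LinearMap.comp_apply, Finsupp.lsingle_apply, Finsupp.single_apply]
    rw [Finset.sum_ite_eq' Finset.univ ψ'
      (fun ψ => mu X.n (B.map (sig n ψ).2 b))]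
    simp
  -- naturality at the level of Finsupps
  have ζnat : ∀ {X Y : FIG G} (g : X ⟶ Y) (b : B.obj X),
      ζapp Y (B.map g b) = Finsupp.mapDomain (fun ψ : (⟨n⟩ : FIG G) ⟶ X => ψ ≫ g)
        (ζapp X b) := by
    intro X Y g b
    refine Finsupp.ext (fun ψ' => ?_)
    rw [ζapp_val]
    by_cases hex : ∃ ψ : (⟨n⟩ : FIG G) ⟶ X, ψ ≫ g = ψ'
    · obtain ⟨ψ, hψ⟩ := hex
      have hrhs : (Finsupp.mapDomain (fun ψ : (⟨n⟩ : FIG G) ⟶ X => ψ ≫ g) (ζapp X b)) ψ'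
          = ζapp X b ψ := by
        rw [← hψ]
        exact Finsupp.mapDomain_apply (comp_right_injective n g) _ ψ
      rw [hrhs, ζapp_val]
      -- move `b` across the chosen automorphism
      have e1 : B.map (sig n ψ').2 (B.map g b) = B.map (g ≫ (sig n ψ').2) b :=
        (map_comp_apply k B g ((sig n ψ').2) b).symm
      have e2 : B.map (g ≫ (sig n ψ').2) b
          = B.map ((sig n ψ).2 ≫ (sig n ψ).1 ≫ g ≫ (sig n ψ').2) b := by
        rw [← Category.assoc, sig_spec3, Category.id_comp]
      have e3 : B.map ((sig n ψ).2 ≫ (sig n ψ).1 ≫ g ≫ (sig n ψ').2) b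
          = B.map ((sig n ψ).1 ≫ g ≫ (sig n ψ').2) (B.map (sig n ψ).2 b) :=
        map_comp_apply k B _ _ b
      rw [e1, e2, e3]
      refine mu_factor (le_of_hom ψ) ((sig n ψ).1 ≫ g ≫ (sig n ψ').2) ?_ _
      have hc : std (le_of_hom ψ) ≫ (sig n ψ).1 ≫ g ≫ (sig n ψ').2
          = std (le_of_hom ψ') := by
        rw [← Category.assoc, sig_spec1, ← Category.assoc, hψ, comp_sig2]
      rw [hc]
    · have hrhs : (Finsupp.mapDomain (fun ψ : (⟨n⟩ : FIG G) ⟶ X => ψ ≫ g) (ζapp X b)) ψ'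
          = 0 :=
        Finsupp.mapDomain_notin_range _ _ (fun hmem => hex hmem)
      rw [hrhs, ← map_comp_apply]
      refine mu_kill (g ≫ (sig n ψ').2) ?_ b
      intro hcov
      obtain ⟨ρ, hρ⟩ := exists_factor_of_covers (g ≫ (sig n ψ').2) (le_of_hom ψ') hcov
      refine hex ⟨ρ, ?_⟩
      have h1 : (ρ ≫ (g ≫ (sig n ψ').2)) ≫ (sig n ψ').1
          = std (le_of_hom ψ') ≫ (sig n ψ').1 := by rw [hρ]
      rw [Category.assoc, Category.assoc, sig_spec3, Category.comp_id, sig_spec1] at h1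
      exact h1
  -- assemble the natural transformation
  refine ⟨⟨fun X => (ModuleCat.ofHom (ζapp X) : B.obj X ⟶ (FIG.free k G n).obj X), ?_⟩, ?_⟩
  · intro X Y g
    refine ModuleCat.hom_ext (LinearMap.ext (fun b => ?_))
    show ζapp Y (B.map g b) = (FIG.free k G n).map g (ζapp X b)
    rw [ζnat g b]
    rfl
  · refine NatTrans.ext (funext (fun X => ?_))
    refine ModuleCat.hom_ext (LinearMap.ext (fun a => ?_))
    show ζapp X (u.app X a) = η.app X a
    refine Finsupp.ext (fun ψ' => ?_)
    rw [ζapp_val]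
    have hnat1 : B.map (sig n ψ').2 (u.app X a)
        = u.app (⟨X.n⟩ : FIG G) (A.map (sig n ψ').2 a) :=
      (congrArg (fun (f : A.obj X ⟶ B.obj (⟨X.n⟩ : FIG G)) => f a)
        (u.naturality (sig n ψ').2)).symm
    rw [hnat1, mu_u, lamb_apply k n η (le_of_hom ψ')]
    have hnat2 : η.app (⟨X.n⟩ : FIG G) (A.map (sig n ψ').2 a)
        = (FIG.free k G n).map (sig n ψ').2 (η.app X a) :=
      congrArg (fun (f : A.obj X ⟶ (FIG.free k G n).obj (⟨X.n⟩ : FIG G)) => f a)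
        (η.naturality (sig n ψ').2)
    rw [hnat2, free_map_apply, ← comp_sig2 n ψ']
    exact Finsupp.mapDomain_apply (comp_right_injective n (sig n ψ').2) _ ψ'

end FreeInjective

end FIGProof


/-- **Theorem.** Let `k` be a field of characteristic 0, `G` a finite group and
`C = FI_G`. Every finitely generated projective `C`-module is an injective object
of the abelian category of `C`-modules. -/
theorem FIG.projective_injective (k : Type) [Field k] [CharZero k]
    (G : Type) [Group G] [Finite G]
    (V : FIG G ⥤ ModuleCat k) (hfg : FIG.FinGen k V) (hproj : Projective V) :
    Injective V := by
  obtain ⟨r, a, p, hp⟩ := hfg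
  haveI := hp
  have hfac : Projective.factorThru (𝟙 V) p ≫ p = 𝟙 V := Projective.factorThru_comp _ _
  haveI : ∀ i : Fin r, Injective (FIG.free k G (a i)) :=
    fun i => FIGProof.free_injective k (a i)
  haveI : Injective (⨁ fun i : Fin r => FIG.free k G (a i)) := inferInstance
  constructor
  intro X Y g f hf
  haveI := hf
  obtain ⟨h, hh⟩ := Injective.factors (g ≫ Projective.factorThru (𝟙 V) p) f
  refine ⟨h ≫ p, ?_⟩
  rw [← Category.assoc, hh, Category.assoc, hfac, Category.comp_id]
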